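/- Let G be a graph, V' ⊆ V(G), and suppose there exists an induced subgraph G' of G such that G' is bipartite and for every v ∈ V', the induced subgraph G[V(G') ∪ {v}] contains an odd cycle. Then there exists a minimal odd cycle transversal Z of G with V' ⊆ Z. -/

import Mathlib

open SimpleGraph

/-- `Z` is an odd cycle transversal: `G − Z` is bipartite. -/
def IsOCT {V : Type*} (G : SimpleGraph V) (Z : Set V) : Prop :=
  (G.induce Zᶜ).Colorable 2

/-- `Z` is a minimal odd cycle transversal. -/
def IsMinOCT {V : Type*} (G : SimpleGraph V) (Z : Set V) : Prop :=
  IsOCT G Z ∧ ∀ Z' ⊂ Z, ¬ IsOCT G Z'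

/-- The induced subgraph on `A` contains an odd cycle. -/
def HasOddCycleOn {V : Type*} (G : SimpleGraph V) (A : Set V) : Prop :=
  ∃ (w : A) (c : (G.induce A).Walk w w), c.IsCycle ∧ Odd c.length

lemma oddCycle_not_colorable {V : Type*} {G : SimpleGraph V} {A B : Set V}
    (hAB : A ⊆ B) (h : HasOddCycleOn G A) : ¬ (G.induce B).Colorable 2 := by
  obtain ⟨w, c, _, hodd⟩ := h
  intro hcol
  have hcol' : (G.induce A).Colorable 2 :=
    Colorable.of_hom (G.induceHomOfLE hAB).toHom hcol
  have h3 := Walk.three_le_chromaticNumber_of_odd_loop c hodd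
  have h2 := hcol'.chromaticNumber_le
  have := h3.trans h2
  norm_num at this

theorem stmt9 {V : Type*} [Fintype V] (G : SimpleGraph V) (V' W : Set V)
    (hBip : (G.induce W).Colorable 2)
    (hOdd : ∀ v ∈ V', HasOddCycleOn G (W ∪ {v})) :
    ∃ Z : Set V, IsMinOCT G Z ∧ V' ⊆ Z := by
  classical
  set S : Set (Set V) := {Z | Z ⊆ Wᶜ ∧ IsOCT G Z} with hS
  have hWc : Wᶜ ∈ S := by
    refine ⟨le_refl _, ?_⟩
    unfold IsOCT
    rwa [compl_compl]
  obtain ⟨Z, hZS, hZmin⟩ : ∃ Z ∈ S, ∀ Z' ∈ S, id Z' ≤ id Z → id Z = id Z' := by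
    obtain ⟨Z, hZ⟩ := (Set.toFinite S).exists_minimal ⟨Wᶜ, hWc⟩
    exact ⟨Z, hZ.prop, fun Z' h1 h2 => le_antisymm (hZ.2 h1 h2) h2⟩
  -- any OCT contained in Wᶜ contains V'
  have key : ∀ Z' ∈ S, V' ⊆ Z' := by
    rintro Z' ⟨hZ'W, hZ'oct⟩ v hv
    by_contra hvZ
    have hsub : W ∪ {v} ⊆ Z'ᶜ := by
      rintro x (hx | hx)
      · exact fun hxZ => (hZ'W hxZ) hx
      · rcases hx with rfl; exact hvZ
    exact oddCycle_not_colorable hsub (hOdd v hv) hZ'oct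
  refine ⟨Z, ⟨hZS.2, ?_⟩, key Z hZS⟩
  intro Z' hZ' hoct
  have hZ'S : Z' ∈ S := ⟨hZ'.1.trans hZS.1, hoct⟩
  have := hZmin Z' hZ'S (le_of_lt hZ'); simp only [id] at this; exact hZ'.2 this.le
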